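/- Fix r ≥ 1. For every x = (x_1,…,x_r) ∈ ℕ^r, Σ_{ρ ∈ P_x} (−1)^{|ρ|+1} = −(−1)^{x_1 + ⋯ + x_r}; in particular the signed sum over all lattice paths from the origin to x with steps in {0,1}^r ∖ {0} depends only on the parity of x_1 + ⋯ + x_r. -/
import Mathlib

/-- For `x ∈ ℕ^r`, `latticePaths x` is the set of lattice paths from the origin to `x`:
finite sequences of steps in `{0,1}^r \ {0}` summing to `x`.  The number of steps of a
path `ρ` is `ρ.length`. -/
def latticePaths {r : ℕ} (x : Fin r → ℕ) : Set (List (Fin r → ℕ)) :=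
  {ρ | (∀ s ∈ ρ, (∀ i, s i ≤ 1) ∧ s ≠ 0) ∧ ρ.sum = x}

namespace SignedLatticePath

open Finset

variable {r : ℕ}

/-- indicator vector of a finset -/
def ind (T : Finset (Fin r)) : Fin r → ℕ := fun i => if i ∈ T then 1 else 0

lemma ind_injective : Function.Injective (ind (r := r)) := by
  intro T T' h
  ext i
  have := congrFun h i
  by_cases hT : i ∈ T <;> by_cases hT' : i ∈ T' <;> simp [ind, hT, hT'] at this ⊢

lemma sum_ind (T : Finset (Fin r)) : ∑ i, ind T i = T.card := by
  simp [ind, Finset.sum_ite_mem]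

lemma one_le_sum_of_ne_zero {s : Fin r → ℕ} (hs : s ≠ 0) : 1 ≤ ∑ i, s i := by
  by_contra h
  push_neg at h
  apply hs
  funext i
  have := Finset.sum_eq_zero_iff.mp (Nat.lt_one_iff.mp h) i (Finset.mem_univ i)
  simpa using this

lemma length_le {x : Fin r → ℕ} {ρ : List (Fin r → ℕ)} (hρ : ρ ∈ latticePaths x) :
    ρ.length ≤ ∑ i, x i := by
  obtain ⟨hsteps, hsum⟩ := hρ
  induction ρ generalizing x with
  | nil => simp
  | cons s t ih =>
    have hsum' : s + t.sum = x := by simpa using hsum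
    have h1 : 1 ≤ ∑ i, s i := one_le_sum_of_ne_zero (hsteps s (by simp)).2
    have ht : t.length ≤ ∑ i, t.sum i :=
      ih (fun u hu => hsteps u (by simp [hu])) rfl
    have : ∑ i, x i = (∑ i, s i) + ∑ i, t.sum i := by
      rw [← hsum']; simp [Finset.sum_add_distrib]
    simp only [List.length_cons, this]
    omega

lemma latticePaths_finite (x : Fin r → ℕ) : (latticePaths x).Finite := by
  have h : latticePaths x ⊆
      (List.map (ind (r := r))) '' {l : List (Finset (Fin r)) | l.length ≤ ∑ i, x i} := by
    intro ρ hρ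
    refine ⟨ρ.map (fun s => Finset.univ.filter (fun i => s i = 1)), ?_, ?_⟩
    · simpa using length_le hρ
    · rw [List.map_map]
      conv_rhs => rw [← List.map_id ρ]
      apply List.map_congr_left
      intro s hs
      funext i
      have h1 : s i ≤ 1 := (hρ.1 s hs).1 i
      simp only [Function.comp_apply, ind, Finset.mem_filter, Finset.mem_univ, true_and, id]
      interval_cases h : s i <;> simp
  exact ((List.finite_length_le _ _).image _).subset h

lemma latticePaths_zero : latticePaths (0 : Fin r → ℕ) = {[]} := by
  ext ρ
  simp only [latticePaths, Set.mem_setOf_eq, Set.mem_singleton_iff]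
  constructor
  · rintro ⟨hsteps, hsum⟩
    cases ρ with
    | nil => rfl
    | cons s t =>
      exfalso
      apply (hsteps s (by simp)).2
      funext i
      have := congrFun (show s + t.sum = 0 by simpa using hsum) i
      simp at this
      simp only [Pi.zero_apply]
      exact this.1
  · rintro rfl
    exact ⟨by simp, by simp⟩

/-- the support of x as a finset -/
def supp (x : Fin r → ℕ) : Finset (Fin r) := Finset.univ.filter (fun i => x i ≠ 0)

lemma decomposition {x : Fin r → ℕ} (hx : x ≠ 0) :
    latticePaths x =
      ⋃ T ∈ (((supp x).powerset.erase ∅ : Finset (Finset (Fin r))) : Set (Finset (Fin r))),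
        (ind T :: ·) '' latticePaths (x - ind T) := by
  ext ρ
  simp only [Set.mem_iUnion, Set.mem_image, Finset.mem_coe, Finset.mem_erase,
    Finset.mem_powerset]
  constructor
  · rintro ⟨hsteps, hsum⟩
    cases ρ with
    | nil =>
      simp only [List.sum_nil] at hsum
      exact absurd hsum.symm hx
    | cons s t =>
      have hsum' : s + t.sum = x := by simpa using hsum
      set T := Finset.univ.filter (fun i => s i = 1) with hT
      have hsind : s = ind T := by
        funext i
        have h1 : s i ≤ 1 := (hsteps s (by simp)).1 i
        simp only [ind, hT, Finset.mem_filter, Finset.mem_univ, true_and]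
        interval_cases h : s i <;> simp
      refine ⟨T, ⟨?_, ?_⟩, t, ⟨?_, ?_⟩, ?_⟩
      · intro hT0
        apply (hsteps s (by simp)).2
        rw [hsind, hT0]; funext i; simp [ind]
      · intro i hi
        simp only [hT, Finset.mem_filter, Finset.mem_univ, true_and] at hi
        have := congrFun hsum' i
        simp only [Pi.add_apply] at this
        simp [supp]; omega
      · exact fun u hu => hsteps u (by simp [hu])
      · rw [← hsind]; funext i
        have := congrFun hsum' i
        simp only [Pi.add_apply] at this
        simp only [Pi.sub_apply]
        omega
      · rw [hsind]
  · rintro ⟨T, ⟨hT0, hTsupp⟩, t, ⟨hsteps, hsum⟩, rfl⟩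
    have hle : ∀ i, ind T i ≤ x i := by
      intro i
      by_cases hi : i ∈ T
      · have := hTsupp hi
        simp only [supp, Finset.mem_filter, Finset.mem_univ, true_and] at this
        simp [ind, hi]; omega
      · simp [ind, hi]
    constructor
    · rintro u hu
      rcases List.mem_cons.mp hu with rfl | hu
      · refine ⟨fun i => by simp [ind]; split <;> simp, ?_⟩
        intro h0
        apply hT0
        ext i
        have := congrFun h0 i
        simp only [ind, Pi.zero_apply] at this
        simp only [Finset.notMem_empty, iff_false]
        intro hi; simp [hi] at this
      · exact hsteps u hu
    · simp only [List.sum_cons, hsum]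
      funext i
      have := hle i
      simp only [Pi.add_apply, Pi.sub_apply]
      omega

lemma neg_one_pow_sub {a b : ℕ} (h : b ≤ a) :
    (-1 : ℤ) ^ (a - b) = (-1) ^ a * (-1) ^ b := by
  have : (-1 : ℤ) ^ (a - b) * (-1) ^ b = (-1) ^ a := by
    rw [← pow_add, Nat.sub_add_cancel h]
  have hb : ((-1 : ℤ) ^ b) * ((-1) ^ b) = 1 := by
    rw [← pow_add, Even.neg_one_pow ⟨b, rfl⟩]
  calc (-1 : ℤ) ^ (a - b) = (-1) ^ (a - b) * ((-1) ^ b * (-1) ^ b) := by rw [hb, mul_one]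
    _ = ((-1) ^ (a - b) * (-1) ^ b) * (-1) ^ b := by ring
    _ = (-1) ^ a * (-1) ^ b := by rw [this]

lemma key : ∀ n : ℕ, ∀ x : Fin r → ℕ, ∑ i, x i = n →
    ∑ᶠ ρ ∈ latticePaths x, (-1 : ℤ) ^ (ρ.length + 1) = -(-1 : ℤ) ^ (∑ i, x i) := by
  intro n
  induction n using Nat.strong_induction_on with
  | _ n ih =>
    intro x hn
    by_cases hx : x = 0
    · subst hx
      rw [latticePaths_zero]
      simp
    · have hsum_pos : 1 ≤ ∑ i, x i := one_le_sum_of_ne_zero hx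
      rw [decomposition hx]
      rw [finsum_mem_biUnion]
      · have hstep : ∀ T ∈ ((supp x).powerset.erase ∅ : Finset (Finset (Fin r))),
            (∑ᶠ ρ ∈ (ind T :: ·) '' latticePaths (x - ind T),
              (-1 : ℤ) ^ (ρ.length + 1)) = (-1) ^ (∑ i, x i - T.card) := by
          intro T hT
          simp only [Finset.mem_erase, Finset.mem_powerset] at hT
          have hle : ∀ i, ind T i ≤ x i := by
            intro i
            by_cases hi : i ∈ T
            · have := hT.2 hi
              simp only [supp, Finset.mem_filter, Finset.mem_univ, true_and] at this
              simp [ind, hi]; omega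
            · simp [ind, hi]
          have hsub : ∑ i, (x - ind T) i = ∑ i, x i - T.card := by
            rw [← sum_ind T]
            simp only [Pi.sub_apply]
            rw [eq_tsub_iff_add_eq_of_le (Finset.sum_le_sum (fun i _ => hle i)),
              ← Finset.sum_add_distrib]
            exact Finset.sum_congr rfl fun i _ => Nat.sub_add_cancel (hle i)
          have hcard1 : 1 ≤ T.card := Finset.card_pos.mpr (Finset.nonempty_of_ne_empty hT.1)
          have hcardle : T.card ≤ ∑ i, x i := by
            rw [← sum_ind T]
            exact Finset.sum_le_sum (fun i _ => hle i)
          rw [finsum_mem_image (fun a _ b _ h => by simpa using h)]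
          have : (∑ᶠ ρ ∈ latticePaths (x - ind T),
              (-1 : ℤ) ^ ((ind T :: ρ).length + 1)) =
              ∑ᶠ ρ ∈ latticePaths (x - ind T), -((-1 : ℤ) ^ (ρ.length + 1)) := by
            apply finsum_mem_congr rfl
            intro ρ _
            simp [pow_succ]
          rw [this, finsum_mem_neg_distrib _ (latticePaths_finite _),
            ih (∑ i, (x - ind T) i) (by omega) _ rfl, hsub]
          ring
        rw [finsum_mem_coe_finset, Finset.sum_congr rfl hstep]
        have : ∀ T ∈ ((supp x).powerset.erase ∅ : Finset (Finset (Fin r))),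
            (-1 : ℤ) ^ (∑ i, x i - T.card) = (-1) ^ (∑ i, x i) * (-1) ^ T.card := by
          intro T hT
          simp only [Finset.mem_erase, Finset.mem_powerset] at hT
          have hle : ∀ i, ind T i ≤ x i := by
            intro i
            by_cases hi : i ∈ T
            · have := hT.2 hi
              simp only [supp, Finset.mem_filter, Finset.mem_univ, true_and] at this
              simp [ind, hi]; omega
            · simp [ind, hi]
          have hcardle : T.card ≤ ∑ i, x i := by
            rw [← sum_ind T]
            exact Finset.sum_le_sum (fun i _ => hle i)
          exact neg_one_pow_sub hcardle
        rw [Finset.sum_congr rfl this, ← Finset.mul_sum]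
        have hsupp : (supp x).Nonempty := by
          rw [Finset.nonempty_iff_ne_empty]
          intro h
          apply hx
          funext i
          have : i ∉ supp x := by rw [h]; exact Finset.notMem_empty i
          simp only [supp, Finset.mem_filter, Finset.mem_univ, true_and, not_not] at this
          exact this
        have hps : ∑ T ∈ (supp x).powerset.erase ∅, (-1 : ℤ) ^ T.card = -1 := by
          have h0 : (∅ : Finset (Fin r)) ∈ (supp x).powerset := by simp
          have := Finset.sum_powerset_neg_one_pow_card_of_nonempty hsupp
          rw [← Finset.add_sum_erase _ _ h0] at this
          simpa using this
        rw [hps]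
        ring
      · -- pairwise disjoint
        intro T _ T' _ hTT'
        simp only [Function.onFun]
        rw [Set.disjoint_left]
        rintro ρ ⟨t, _, rfl⟩ ⟨t', _, ht'⟩
        apply hTT'
        injection ht' with h1 h2
        exact ind_injective h1.symm
      · exact Finset.finite_toSet _
      · intro T _
        exact (latticePaths_finite _).image _

end SignedLatticePath

/-- the signed count of lattice paths from the origin to `x` with steps in
`{0,1}^r \ {0}`, each path `ρ` counted with sign `(-1)^{|ρ|+1}`, equals
`-(-1)^{x₁ + ⋯ + x_r}`; in particular it depends only on the parity of `x₁ + ⋯ + x_r`. -/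
theorem signed_lattice_path_count {r : ℕ} (hr : 1 ≤ r) (x : Fin r → ℕ) :
    ∑ᶠ ρ ∈ latticePaths x, (-1 : ℤ) ^ (ρ.length + 1) =
      -(-1 : ℤ) ^ (∑ i, x i) := by
  exact SignedLatticePath.key _ x rfl
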